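/- The following equations hold in U(sl₂): [xy, yz] = 2xyz + y² − xz, [yz, zx] = 2yzx + z² − yx, and [zx, xy] = 2zxy + x² − zy. -/
import Mathlib


open scoped TensorProduct

noncomputable section

namespace RacahPaper

variable (F : Type) [Field F]

/-- Defining relations of `U(sl₂)`: generators `e = ι 0`, `f = ι 1`, `h = ι 2` with
`he - eh = 2e`, `hf - fh = -2f`, `ef - fe = h`. -/
inductive slRel : FreeAlgebra F (Fin 3) → FreeAlgebra F (Fin 3) → Prop
  | he : slRel (FreeAlgebra.ι F 2 * FreeAlgebra.ι F 0 - FreeAlgebra.ι F 0 * FreeAlgebra.ι F 2)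
      (2 * FreeAlgebra.ι F 0)
  | hf : slRel (FreeAlgebra.ι F 2 * FreeAlgebra.ι F 1 - FreeAlgebra.ι F 1 * FreeAlgebra.ι F 2)
      (-(2 * FreeAlgebra.ι F 1))
  | ef : slRel (FreeAlgebra.ι F 0 * FreeAlgebra.ι F 1 - FreeAlgebra.ι F 1 * FreeAlgebra.ι F 0)
      (FreeAlgebra.ι F 2)

/-- The universal enveloping algebra `U(sl₂)`. -/
abbrev U := RingQuot (slRel F)

/-- The generator `e` of `U(sl₂)`. -/
def e : U F := RingQuot.mkAlgHom F (slRel F) (FreeAlgebra.ι F 0)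

/-- The generator `f` of `U(sl₂)`. -/
def f : U F := RingQuot.mkAlgHom F (slRel F) (FreeAlgebra.ι F 1)

/-- The generator `h` of `U(sl₂)`. -/
def h : U F := RingQuot.mkAlgHom F (slRel F) (FreeAlgebra.ι F 2)

/-- The equitable generator `x = -f - h/2`. -/
def ux : U F := -f F - (2 : F)⁻¹ • h F

/-- The equitable generator `y = h/2`. -/
def uy : U F := (2 : F)⁻¹ • h F

/-- The equitable generator `z = e - h/2`. -/
def uz : U F := e F - (2 : F)⁻¹ • h F

/-- The normalized Casimir element `Λ = ef + h(h-2)/4` of `U(sl₂)`. -/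
def Lam : U F := e F * f F + (4 : F)⁻¹ • (h F * (h F - 2))

/-- `ν_x = f/2`. -/
def nux : U F := (2 : F)⁻¹ • f F

/-- `ν_z = e/2`. -/
def nuz : U F := (2 : F)⁻¹ • e F

/-- `U_n`: the span of the `e^i h^j f^k` with `k - i = n`. -/
def Usub (n : ℤ) : Submodule F (U F) :=
  Submodule.span F {u : U F | ∃ i j k : ℕ, (k : ℤ) - (i : ℤ) = n ∧ u = e F ^ i * h F ^ j * f F ^ k}

-- Racah algebra
/-- Generator `A` of the free algebra. -/
def fA : FreeAlgebra F (Fin 4) := FreeAlgebra.ι F 0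
/-- Generator `B` of the free algebra. -/
def fB : FreeAlgebra F (Fin 4) := FreeAlgebra.ι F 1
/-- Generator `C` of the free algebra. -/
def fC : FreeAlgebra F (Fin 4) := FreeAlgebra.ι F 2
/-- Generator `D` of the free algebra. -/
def fD : FreeAlgebra F (Fin 4) := FreeAlgebra.ι F 3

/-- `α = [A,D] + AC - BA` in the free algebra. -/
def falpha : FreeAlgebra F (Fin 4) := (fA F * fD F - fD F * fA F) + fA F * fC F - fB F * fA F
/-- `β = [B,D] + BA - CB` in the free algebra. -/
def fbeta : FreeAlgebra F (Fin 4) := (fB F * fD F - fD F * fB F) + fB F * fA F - fC F * fB F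
/-- `γ = [C,D] + CB - AC` in the free algebra. -/
def fgamma : FreeAlgebra F (Fin 4) := (fC F * fD F - fD F * fC F) + fC F * fB F - fA F * fC F

/-- Defining relations of the Racah algebra: `[A,B] = [B,C] = [C,A] = 2D` and each of
`α, β, γ` commutes with each of the generators `A, B, C, D`. -/
inductive racahRel : FreeAlgebra F (Fin 4) → FreeAlgebra F (Fin 4) → Prop
  | AB : racahRel (fA F * fB F - fB F * fA F) (2 * fD F)
  | BC : racahRel (fB F * fC F - fC F * fB F) (2 * fD F)
  | CA : racahRel (fC F * fA F - fA F * fC F) (2 * fD F)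
  | calpha (i : Fin 4) : racahRel (falpha F * FreeAlgebra.ι F i) (FreeAlgebra.ι F i * falpha F)
  | cbeta (i : Fin 4) : racahRel (fbeta F * FreeAlgebra.ι F i) (FreeAlgebra.ι F i * fbeta F)
  | cgamma (i : Fin 4) : racahRel (fgamma F * FreeAlgebra.ι F i) (FreeAlgebra.ι F i * fgamma F)

/-- The Racah algebra `ℜ`. -/
abbrev Racah := RingQuot (racahRel F)

/-- Generator `A` of the Racah algebra. -/
def A : Racah F := RingQuot.mkAlgHom F (racahRel F) (fA F)
/-- Generator `B` of the Racah algebra. -/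
def B : Racah F := RingQuot.mkAlgHom F (racahRel F) (fB F)
/-- Generator `C` of the Racah algebra. -/
def C : Racah F := RingQuot.mkAlgHom F (racahRel F) (fC F)
/-- Generator `D` of the Racah algebra. -/
def D : Racah F := RingQuot.mkAlgHom F (racahRel F) (fD F)

/-- `α = [A,D] + AC - BA` in the Racah algebra. -/
def alpha : Racah F := (A F * D F - D F * A F) + A F * C F - B F * A F
/-- `β = [B,D] + BA - CB` in the Racah algebra. -/
def beta : Racah F := (B F * D F - D F * B F) + B F * A F - C F * B F
/-- `γ = [C,D] + CB - AC` in the Racah algebra. -/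
def gamma : Racah F := (C F * D F - D F * C F) + C F * B F - A F * C F
/-- `δ = A + B + C` in the Racah algebra. -/
def delta : Racah F := A F + B F + C F

/-- `Ω_A = D² + (BAC + CAB)/2 + A² + Bγ - Cβ - Aδ`. -/
def OmegaA : Racah F :=
  D F ^ 2 + (2 : F)⁻¹ • (B F * A F * C F + C F * A F * B F) + A F ^ 2
    + B F * gamma F - C F * beta F - A F * delta F

/-- `Ω_B = D² + (CBA + ABC)/2 + B² + Cα - Aγ - Bδ`. -/
def OmegaB : Racah F :=
  D F ^ 2 + (2 : F)⁻¹ • (C F * B F * A F + A F * B F * C F) + B F ^ 2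
    + C F * alpha F - A F * gamma F - B F * delta F

/-- `Ω_C = D² + (ACB + BCA)/2 + C² + Aβ - Bα - Cδ`. -/
def OmegaC : Racah F :=
  D F ^ 2 + (2 : F)⁻¹ • (A F * C F * B F + B F * C F * A F) + C F ^ 2
    + A F * beta F - B F * alpha F - C F * delta F

-- the tensor algebra F[a,b,c] ⊗ U(sl2)
/-- The polynomial algebra `F[a,b,c]`. -/
abbrev P := MvPolynomial (Fin 3) F

/-- The tensor product algebra `F[a,b,c] ⊗ U(sl₂)`. -/
abbrev T := P F ⊗[F] U F

/-- The indeterminate `a`. -/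
def pa : P F := MvPolynomial.X 0
/-- The indeterminate `b`. -/
def pb : P F := MvPolynomial.X 1
/-- The indeterminate `c`. -/
def pc : P F := MvPolynomial.X 2

/-- `A♮`. -/
def Anat : T F :=
  (pa F * (pa F + 1)) ⊗ₜ[F] (1 : U F) + (pb F - pc F - pa F) ⊗ₜ[F] ux F
    + (pa F + pb F - pc F + 1) ⊗ₜ[F] uy F - (1 : P F) ⊗ₜ[F] (ux F * uy F)

/-- `B♮`. -/
def Bnat : T F :=
  (pb F * (pb F + 1)) ⊗ₜ[F] (1 : U F) + (pc F - pa F - pb F) ⊗ₜ[F] uy F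
    + (pb F + pc F - pa F + 1) ⊗ₜ[F] uz F - (1 : P F) ⊗ₜ[F] (uy F * uz F)

/-- `C♮`. -/
def Cnat : T F :=
  (pc F * (pc F + 1)) ⊗ₜ[F] (1 : U F) + (pa F - pb F - pc F) ⊗ₜ[F] uz F
    + (pc F + pa F - pb F + 1) ⊗ₜ[F] ux F - (1 : P F) ⊗ₜ[F] (uz F * ux F)

/-- `D♮`. -/
def Dnat : T F :=
  (1 : P F) ⊗ₜ[F] (uz F * uy F * ux F + uz F * ux F)
    + (pc F + pb F * (pc F + pa F - pb F)) ⊗ₜ[F] ux F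
    + (pa F + pc F * (pa F + pb F - pc F)) ⊗ₜ[F] uy F
    + (pb F + pa F * (pb F + pc F - pa F)) ⊗ₜ[F] uz F
    + (pb F - pc F) ⊗ₜ[F] (ux F * uy F)
    + (pc F - pa F) ⊗ₜ[F] (uy F * uz F)
    + (pa F - pb F) ⊗ₜ[F] (uz F * ux F)

/-- `R = 2 ⊗ yν_x + 2(c+a-b+1) ⊗ ν_x`. -/
def Rel : T F :=
  (2 : P F) ⊗ₜ[F] (uy F * nux F) + (2 * (pc F + pa F - pb F + 1)) ⊗ₜ[F] nux F

/-- `L = -2 ⊗ yν_z - 2(a-b-c-1) ⊗ ν_z`. -/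
def Lel : T F :=
  -((2 : P F) ⊗ₜ[F] (uy F * nuz F)) - (2 * (pa F - pb F - pc F - 1)) ⊗ₜ[F] nuz F

/-- `θ = 1⊗y - b⊗1`. -/
def theta : T F := (1 : P F) ⊗ₜ[F] uy F - pb F ⊗ₜ[F] (1 : U F)

/-- `ϑ = 1⊗y + a⊗1`. -/
def vartheta : T F := (1 : P F) ⊗ₜ[F] uy F + pa F ⊗ₜ[F] (1 : U F)

/-- `F[a,b,c] ⊗ U_n` as a subspace of `F[a,b,c] ⊗ U(sl₂)`. -/
def TU (n : ℤ) : Submodule F (T F) :=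
  Submodule.span F {t : T F | ∃ (p : P F) (u : U F), u ∈ Usub F n ∧ t = p ⊗ₜ[F] u}


section Aux

variable {R : Type} [Ring R] [Algebra F R]

lemma keyRel (E Fv H : R)
    (hE : H * E - E * H = (2:F) • E) (hF : H * Fv - Fv * H = -((2:F) • Fv))
    (hEF : E * Fv - Fv * E = H) (hchar : (2:F) ≠ 0) :
    ((-Fv - (2:F)⁻¹ • H) * ((2:F)⁻¹ • H) - ((2:F)⁻¹ • H) * (-Fv - (2:F)⁻¹ • H)
        = (-Fv - (2:F)⁻¹ • H) + (2:F)⁻¹ • H) ∧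
    (((2:F)⁻¹ • H) * (E - (2:F)⁻¹ • H) - (E - (2:F)⁻¹ • H) * ((2:F)⁻¹ • H)
        = (2:F)⁻¹ • H + (E - (2:F)⁻¹ • H)) ∧
    ((E - (2:F)⁻¹ • H) * (-Fv - (2:F)⁻¹ • H) - (-Fv - (2:F)⁻¹ • H) * (E - (2:F)⁻¹ • H)
        = (E - (2:F)⁻¹ • H) + (-Fv - (2:F)⁻¹ • H)) := by
  have s2 : (2:F)⁻¹ • ((2:F) • Fv) = Fv := by rw [smul_smul, inv_mul_cancel₀ hchar, one_smul]
  have s2e : (2:F)⁻¹ • ((2:F) • E) = E := by rw [smul_smul, inv_mul_cancel₀ hchar, one_smul]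
  have hh : (2:F)⁻¹ • H + (2:F)⁻¹ • H = H := by
    rw [← two_smul F, smul_smul, mul_inv_cancel₀ hchar, one_smul]
  refine ⟨?_, ?_, ?_⟩
  · have key : (-Fv - (2:F)⁻¹ • H) * ((2:F)⁻¹ • H) - ((2:F)⁻¹ • H) * (-Fv - (2:F)⁻¹ • H)
        = (2:F)⁻¹ • (H * Fv - Fv * H) := by
      simp only [sub_mul, mul_sub, neg_mul, mul_neg, smul_mul_assoc, mul_smul_comm, smul_smul,
        smul_sub, smul_neg, neg_neg]
      abel
    rw [key, hF, smul_neg, s2]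
    abel
  · have key : ((2:F)⁻¹ • H) * (E - (2:F)⁻¹ • H) - (E - (2:F)⁻¹ • H) * ((2:F)⁻¹ • H)
        = (2:F)⁻¹ • (H * E - E * H) := by
      simp only [sub_mul, mul_sub, smul_mul_assoc, mul_smul_comm, smul_smul, smul_sub]
      abel
    rw [key, hE, s2e]
    abel
  · have key : (E - (2:F)⁻¹ • H) * (-Fv - (2:F)⁻¹ • H) - (-Fv - (2:F)⁻¹ • H) * (E - (2:F)⁻¹ • H)
        = (2:F)⁻¹ • (H * E - E * H) + (2:F)⁻¹ • (H * Fv - Fv * H) - (E * Fv - Fv * E) := by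
      simp only [sub_mul, mul_sub, neg_mul, mul_neg, smul_mul_assoc, mul_smul_comm, smul_smul,
        smul_sub, smul_neg, neg_neg, smul_add]
      abel
    rw [key, hE, hF, hEF, s2e, smul_neg, s2]
    calc E + -Fv - H = E - (2:F)⁻¹ • H + (-Fv - (2:F)⁻¹ • H)
          + ((2:F)⁻¹ • H + (2:F)⁻¹ • H) - H := by abel
      _ = E - (2:F)⁻¹ • H + (-Fv - (2:F)⁻¹ • H) := by rw [hh]; abel

lemma flip1 (x y : R) (hf : x * y - y * x = x + y) : y * x = x * y - x - y := by
  rw [sub_sub, ← hf]; abel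

lemma flip2 (z x : R) (hf : z * x - x * z = z + x) : z * x = x * z + z + x := by
  calc z * x = x * z + (z * x - x * z) := by abel
    _ = x * z + (z + x) := by rw [hf]
    _ = x * z + z + x := by abel

lemma cyc {S : Type*} [Ring S] (x y z : S)
    (h1 : y * x = x * y - x - y) (h2 : z * y = y * z - y - z)
    (h3 : z * x = x * z + z + x) :
    x * y * (y * z) - y * z * (x * y) = 2 * (x * y * z) + y ^ 2 - x * z := by
  have e1 : y * z * (x * y) = x * y * (y * z) - 2 * (x * y * z) + x * z - y ^ 2 := by
    calc y * z * (x * y) = y * (z * x) * y := by noncomm_ring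
      _ = y * (x * z + z + x) * y := by rw [h3]
      _ = (y * x) * (z * y) + y * (z * y) + (y * x) * y := by noncomm_ring
      _ = (x * y - x - y) * (y * z - y - z) + y * (y * z - y - z) + (x * y - x - y) * y := by
          rw [h1, h2]
      _ = x * y * (y * z) - 2 * (x * y * z) + x * z - y ^ 2 := by noncomm_ring
  rw [e1]; noncomm_ring

end Aux

lemma He : h F * e F - e F * h F = (2:F) • e F := by
  have := RingQuot.mkAlgHom_rel F (slRel.he (F := F))
  simp only [map_sub, map_mul, map_ofNat] at this
  rw [h, e, this]
  simp [Algebra.smul_def, map_ofNat]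

lemma Hf : h F * f F - f F * h F = -((2:F) • f F) := by
  have := RingQuot.mkAlgHom_rel F (slRel.hf (F := F))
  simp only [map_sub, map_mul, map_neg, map_ofNat] at this
  rw [h, f, this]
  simp [Algebra.smul_def, map_ofNat]

lemma Hef : e F * f F - f F * e F = h F := by
  have := RingQuot.mkAlgHom_rel F (slRel.ef (F := F))
  simp only [map_sub, map_mul] at this
  rw [e, f, h, this]

theorem statement12 (hchar : (2 : F) ≠ 0) :
    (ux F * uy F) * (uy F * uz F) - (uy F * uz F) * (ux F * uy F)
        = 2 * (ux F * uy F * uz F) + uy F ^ 2 - ux F * uz F ∧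
    (uy F * uz F) * (uz F * ux F) - (uz F * ux F) * (uy F * uz F)
        = 2 * (uy F * uz F * ux F) + uz F ^ 2 - uy F * ux F ∧
    (uz F * ux F) * (ux F * uy F) - (ux F * uy F) * (uz F * ux F)
        = 2 * (uz F * ux F * uy F) + ux F ^ 2 - uz F * uy F := by
  obtain ⟨h1, h2, h3⟩ := keyRel (F := F) (e F) (f F) (h F) (He F) (Hf F) (Hef F) hchar
  have hxy : ux F * uy F - uy F * ux F = ux F + uy F := h1
  have hyz : uy F * uz F - uz F * uy F = uy F + uz F := h2
  have hzx : uz F * ux F - ux F * uz F = uz F + ux F := h3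
  exact ⟨cyc _ _ _ (flip1 _ _ hxy) (flip1 _ _ hyz) (flip2 _ _ hzx),
    cyc _ _ _ (flip1 _ _ hyz) (flip1 _ _ hzx) (flip2 _ _ hxy),
    cyc _ _ _ (flip1 _ _ hzx) (flip1 _ _ hxy) (flip2 _ _ hyz)⟩

end RacahPaper
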